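/- There exists a universal constant C > 0 such that for every μ ∈ {+1,−1}, every j ∈ {1,2,3}, every k ∈ ℤ, every t > 0, every x ∈ ℝ³, every v ∈ ℝ³ with v ≠ 0, every bounded measurable G : ℝ³ → ℂ, and every measurable χ : ℝ → ℝ with |χ| ≤ 1 and χ(r) = 0 for |r| ≥ 2^{12}, the integral K := ∫_{2^{k−2} ≤ |ξ| ≤ 2^{k+2}} e^{ i (x + t v̂)·ξ − i t μ |ξ| } · ( ((e_j×v)·ξ)/|v| ) · G(ξ) · χ( t(|ξ| − μ v̂·ξ) ) dξ satisfies both |K| ≤ C · t^{−1} · 2^{3k} · sup_{2^{k−2} ≤ |ξ| ≤ 2^{k+2}} |G(ξ)| and (1+|v|)^{−1}·|K| ≤ C · t^{−2} · 2^{2k} · sup_{2^{k−2} ≤ |ξ| ≤ 2^{k+2}} |G(ξ)|. -/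

import Mathlib

open MeasureTheory
open scoped RealInnerProductSpace

noncomputable section

abbrev E3 : Type := EuclideanSpace ℝ (Fin 3)

/-- The relativistic velocity `v̂ = v / √(1+|v|²)`. -/
def vhat (v : E3) : E3 := (Real.sqrt (1 + ‖v‖ ^ 2))⁻¹ • v

/-- The standard orthonormal basis vectors `e₁, e₂, e₃` of `ℝ³`. -/
def stdB (i : Fin 3) : E3 := EuclideanSpace.single i (1 : ℝ)

/-- The cross product on `ℝ³`. -/
def cross3 (a b : E3) : E3 :=
  EuclideanSpace.single 0 (a 1 * b 2 - a 2 * b 1) +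
    EuclideanSpace.single 1 (a 2 * b 0 - a 0 * b 2) +
    EuclideanSpace.single 2 (a 0 * b 1 - a 1 * b 0)

lemma inner3 (x y : E3) : ⟪x, y⟫ = x 0 * y 0 + x 1 * y 1 + x 2 * y 2 := by
  simp [PiLp.inner_apply, Fin.sum_univ_three, RCLike.inner_apply, mul_comm]

lemma cross3_apply0 (a b : E3) : cross3 a b 0 = a 1 * b 2 - a 2 * b 1 := by
  simp [cross3, EuclideanSpace.single_apply]
lemma cross3_apply1 (a b : E3) : cross3 a b 1 = a 2 * b 0 - a 0 * b 2 := by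
  simp [cross3, EuclideanSpace.single_apply]
lemma cross3_apply2 (a b : E3) : cross3 a b 2 = a 0 * b 1 - a 1 * b 0 := by
  simp [cross3, EuclideanSpace.single_apply]

lemma cross3_inner_right (a b : E3) : ⟪cross3 a b, b⟫ = 0 := by
  rw [inner3, cross3_apply0, cross3_apply1, cross3_apply2]; ring

lemma cross3_norm_le (a b : E3) : ‖cross3 a b‖ ≤ ‖a‖ * ‖b‖ := by
  have h1 : ⟪cross3 a b, cross3 a b⟫ ≤ ⟪a,a⟫ * ⟪b,b⟫ := by
    rw [inner3, inner3, inner3, cross3_apply0, cross3_apply1, cross3_apply2]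
    nlinarith [sq_nonneg (a 0 * b 0 + a 1 * b 1 + a 2 * b 2)]
  rw [real_inner_self_eq_norm_sq, real_inner_self_eq_norm_sq, real_inner_self_eq_norm_sq] at h1
  have := norm_nonneg (cross3 a b)
  nlinarith [norm_nonneg a, norm_nonneg b, mul_nonneg (norm_nonneg a) (norm_nonneg b)]

lemma stdB_norm (i : Fin 3) : ‖stdB i‖ = 1 := by simp [stdB]

/-- pure real-arithmetic core of the resonance-set estimates -/
lemma realgeom {A t n q r s : ℝ} (hA : 0 < A) (ht : 0 < t) (hn0 : 0 < n)
    (hq2 : q ^ 2 = 1 + n ^ 2) (hq1 : 1 ≤ q) (hqn : n ≤ q) (hqle : q ≤ 1 + n)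
    (hr0 : 0 ≤ r) (hs1 : -r ≤ s) (hs2 : s ≤ r)
    (hD' : t * (q * r - n * s) < A * q) :
    t * (r ^ 2 - s ^ 2) ≤ 4 * A * r ∧ t * r ≤ 2 * (1 + n) ^ 2 * A := by
  have hq0 : 0 < q := lt_of_lt_of_le one_pos hq1
  have hF1 : t * (r - s) ≤ 2 * A := by
    have key : q * (r - s) ≤ 2 * (q * r - n * s) := by
      nlinarith [mul_nonneg (sub_nonneg.2 hqn) (by linarith : (0:ℝ) ≤ r + s),
        mul_nonneg hn0.le (by linarith : (0:ℝ) ≤ r - s)]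
    have h2 : t * (q * (r - s)) ≤ t * (2 * (q * r - n * s)) :=
      mul_le_mul_of_nonneg_left key ht.le
    have h3 : q * (t * (r - s)) ≤ q * (2 * A) := by nlinarith
    exact le_of_mul_le_mul_left h3 hq0
  constructor
  · have h4 : t * (r - s) * (r + s) ≤ 2 * A * (r + s) :=
      mul_le_mul_of_nonneg_right hF1 (by linarith)
    nlinarith
  · have hqn1 : (q - n) * (q + n) = 1 := by linear_combination hq2
    have hk1 : q * (q + n) ≤ 2 * (1 + n) ^ 2 := by nlinarith
    have hqn0 : (0:ℝ) < q + n := by linarith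
    have hk : q ≤ 2 * (1 + n) ^ 2 * (q - n) := by
      have hh : q * (q + n) ≤ (2 * (1 + n) ^ 2 * (q - n)) * (q + n) := by
        calc q * (q + n) ≤ 2 * (1 + n) ^ 2 := hk1
          _ = 2 * (1 + n) ^ 2 * ((q - n) * (q + n)) := by rw [hqn1]; ring
          _ = (2 * (1 + n) ^ 2 * (q - n)) * (q + n) := by ring
      exact le_of_mul_le_mul_right hh hqn0
    have h6 : t * (r * (q - n)) ≤ t * (q * r - n * s) := by
      apply mul_le_mul_of_nonneg_left _ ht.le
      nlinarith
    have h7 : t * (r * (q - n)) < A * q := lt_of_le_of_lt h6 hD'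
    have e1 : t * r * q ≤ t * r * (2 * (1 + n) ^ 2 * (q - n)) :=
      mul_le_mul_of_nonneg_left hk (mul_nonneg ht.le hr0)
    have e2 : (2 * (1 + n) ^ 2) * (t * (r * (q - n))) ≤ (2 * (1 + n) ^ 2) * (A * q) :=
      mul_le_mul_of_nonneg_left h7.le (by positivity)
    have h8 : q * (t * r) ≤ q * (2 * (1 + n) ^ 2 * A) := by nlinarith [e1, e2]
    exact le_of_mul_le_mul_left h8 hq0

lemma geom {μ t : ℝ} (hμ : μ = 1 ∨ μ = -1) (ht : 0 < t) {v ξ : E3} (hv : v ≠ 0)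
    (hD : t * (‖ξ‖ - μ * ⟪vhat v, ξ⟫) < 2 ^ 12) :
    t * (‖ξ‖ ^ 2 - (‖v‖⁻¹ * ⟪v, ξ⟫) ^ 2) ≤ 4 * 2 ^ 12 * ‖ξ‖ ∧
    t * ‖ξ‖ ≤ 2 * (1 + ‖v‖) ^ 2 * 2 ^ 12 := by
  set A : ℝ := 2 ^ 12 with hAdef
  have hA : (0:ℝ) < A := by positivity
  set n := ‖v‖ with hn
  have hn0 : 0 < n := norm_pos_iff.2 hv
  set r := ‖ξ‖ with hr
  have hr0 : 0 ≤ r := norm_nonneg _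
  set p := ⟪v, ξ⟫ with hp
  set q := Real.sqrt (1 + n ^ 2) with hqdef
  have hq2 : q ^ 2 = 1 + n ^ 2 := Real.sq_sqrt (by positivity)
  have hq1 : 1 ≤ q := by
    nlinarith [Real.sqrt_nonneg (1 + n ^ 2)]
  have hq0 : 0 < q := lt_of_lt_of_le one_pos hq1
  have hqn : n ≤ q := by nlinarith
  have hqle : q ≤ 1 + n := by nlinarith
  have hinner : ⟪vhat v, ξ⟫ = q⁻¹ * p := by
    rw [vhat, real_inner_smul_left]
  set s := μ * (n⁻¹ * p) with hsdef
  have hμ2 : μ ^ 2 = 1 := by rcases hμ with h | h <;> simp [h]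
  have hps : |p| ≤ n * r := abs_real_inner_le_norm v ξ
  have hμabs : |μ| = 1 := by rcases hμ with h | h <;> simp [h]
  have hs_abs : |s| ≤ r := by
    have h0 : |s| = |μ| * (n⁻¹ * |p|) := by
      rw [hsdef, abs_mul, abs_mul, abs_inv, abs_of_pos hn0]
    rw [h0, hμabs, one_mul, inv_mul_le_iff₀ hn0]
    linarith [hps]
  have hs1 : -r ≤ s := neg_le_of_abs_le hs_abs
  have hs2 : s ≤ r := le_of_abs_le hs_abs
  have hns : n * s = μ * p := by
    rw [hsdef]; field_simp
  have hD' : t * (q * r - n * s) < A * q := by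
    have h1 : q * (r - μ * (q⁻¹ * p)) = q * r - n * s := by
      field_simp [hns]; linarith [hns]
    have h2 := mul_lt_mul_of_pos_left hD hq0
    calc t * (q * r - n * s) = q * (t * (r - μ * ⟪vhat v, ξ⟫)) := by
          rw [hinner, ← h1]; ring
      _ < q * A := h2
      _ = A * q := mul_comm _ _
  have hs2' : s ^ 2 = (n⁻¹ * p) ^ 2 := by rw [hsdef, mul_pow, hμ2, one_mul]
  have hout := realgeom hA ht hn0 hq2 hq1 hqn hqle hr0 hs1 hs2 hD'
  rw [hs2'] at hout
  exact hout

lemma box_volume (b : OrthonormalBasis (Fin 3) ℝ E3) (c : Fin 3 → ℝ) :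
    volume {ξ : E3 | ∀ i, |⟪b i, ξ⟫| ≤ c i} =
      ENNReal.ofReal (2 * c 0) * ENNReal.ofReal (2 * c 1) * ENNReal.ofReal (2 * c 2) := by
  have hT : MeasurableSet (Set.univ.pi fun i : Fin 3 => Set.Icc (-(c i)) (c i)) :=
    MeasurableSet.univ_pi fun i => measurableSet_Icc
  have hS : {ξ : E3 | ∀ i, |⟪b i, ξ⟫| ≤ c i} =
      b.repr ⁻¹' ((MeasurableEquiv.toLp 2 (Fin 3 → ℝ)).symm ⁻¹'
        (Set.univ.pi fun i : Fin 3 => Set.Icc (-(c i)) (c i))) := by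
    ext ξ
    simp only [Set.mem_setOf_eq, Set.mem_preimage, Set.mem_pi, Set.mem_univ, forall_true_left,
      Set.mem_Icc, ← abs_le]
    have he : ∀ (y : EuclideanSpace ℝ (Fin 3)) (i : Fin 3),
        (MeasurableEquiv.toLp 2 (Fin 3 → ℝ)).symm y i = y i := fun _ _ => rfl
    constructor
    · intro h i
      rw [he, b.repr_apply_apply]
      exact h i
    · intro h i
      have := h i
      rw [he, b.repr_apply_apply] at this
      exact this
  rw [hS, (b.measurePreserving_repr).measure_preimage,
    (EuclideanSpace.volume_preserving_symm_measurableEquiv_toLp (Fin 3)).measure_preimage,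
    volume_pi_pi, Fin.prod_univ_three]
  · simp [Real.volume_Icc]
    congr 1 <;> try (congr 1) <;> ring_nf
    all_goals rw [ENNReal.ofReal_mul' (by norm_num), ENNReal.ofReal_ofNat]
  · exact hT.nullMeasurableSet
  · exact ((MeasurableEquiv.toLp 2 (Fin 3 → ℝ)).symm.measurable hT).nullMeasurableSet

lemma intbound {F : E3 → ℂ} {S Box : Set E3} (hS : MeasurableSet S) (hBox : MeasurableSet Box)
    (hfin : volume Box < ⊤) {B : ℝ} (hB : 0 ≤ B)
    (h : ∀ ξ ∈ S, ‖F ξ‖ ≤ Box.indicator (fun _ => B) ξ) :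
    ‖∫ ξ in S, F ξ‖ ≤ (volume Box).toReal * B := by
  have hInt : Integrable (Box.indicator (fun _ => B)) volume := by
    rw [integrable_indicator_iff hBox]
    exact integrableOn_const hfin.ne
  have hnn : 0 ≤ᵐ[volume] Box.indicator (fun _ : E3 => B) :=
    Filter.Eventually.of_forall (Set.indicator_nonneg (fun _ _ => hB))
  calc ‖∫ ξ in S, F ξ‖ ≤ ∫ ξ in S, ‖F ξ‖ := norm_integral_le_integral_norm _
    _ ≤ ∫ ξ in S, Box.indicator (fun _ => B) ξ := by
        refine integral_mono_of_nonneg (Filter.Eventually.of_forall fun ξ => norm_nonneg _)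
          hInt.restrict ?_
        exact (ae_restrict_iff' hS).2 (Filter.Eventually.of_forall h)
    _ ≤ ∫ ξ, Box.indicator (fun _ => B) ξ := setIntegral_le_integral hInt hnn
    _ = (volume Box).toReal * B := by
        rw [integral_indicator_const _ hBox]; simp [smul_eq_mul]; exact Or.inl rfl

lemma exists_onb (u : E3) (hu : ‖u‖ = 1) : ∃ b : OrthonormalBasis (Fin 3) ℝ E3, b 0 = u := by
  have card : Module.finrank ℝ E3 = Fintype.card (Fin 3) := by
    simp [finrank_euclideanSpace]
  have horth : Orthonormal ℝ (({0} : Set (Fin 3)).restrict (fun _ : Fin 3 => u)) := by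
    rw [orthonormal_iff_ite]
    rintro ⟨i, hi⟩ ⟨j, hj⟩
    simp only [Set.mem_singleton_iff] at hi hj
    subst hi; subst hj
    have h1 : (inner ℝ u u : ℝ) = 1 := by rw [real_inner_self_eq_norm_sq, hu]; norm_num
    simp [Set.restrict, h1, hu]
  obtain ⟨b, hb⟩ := horth.exists_orthonormalBasis_extension_of_card_eq card
  exact ⟨b, hb 0 rfl⟩

/-- Gain of negative powers of `t` from the smallness of the time-resonance set
(estimates (7.71)–(7.72) of the paper). -/
theorem stmt17 :
    ∃ C : ℝ, 0 < C ∧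
      ∀ μ : ℝ, (μ = 1 ∨ μ = -1) → ∀ (j : Fin 3) (k : ℤ) (t : ℝ), 0 < t →
        ∀ x v : E3, v ≠ 0 → ∀ G : E3 → ℂ, Measurable G → ∀ MG : ℝ,
          (∀ ξ : E3, (2 : ℝ) ^ (k - 2) ≤ ‖ξ‖ → ‖ξ‖ ≤ (2 : ℝ) ^ (k + 2) → ‖G ξ‖ ≤ MG) →
          ∀ χ : ℝ → ℝ, Measurable χ → (∀ r : ℝ, |χ r| ≤ 1) →
            (∀ r : ℝ, (2 : ℝ) ^ (12 : ℕ) ≤ |r| → χ r = 0) →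
            ‖∫ ξ in {ξ : E3 | (2 : ℝ) ^ (k - 2) ≤ ‖ξ‖ ∧ ‖ξ‖ ≤ (2 : ℝ) ^ (k + 2)},
                Complex.exp (Complex.I * ((⟪x + t • vhat v, ξ⟫ - t * μ * ‖ξ‖ : ℝ) : ℂ)) *
                  ((⟪cross3 (stdB j) v, ξ⟫ / ‖v‖ : ℝ) : ℂ) *
                  G ξ * ((χ (t * (‖ξ‖ - μ * ⟪vhat v, ξ⟫)) : ℝ) : ℂ)‖ ≤
              C * t⁻¹ * (2 : ℝ) ^ (3 * k) * MG ∧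
            (1 + ‖v‖)⁻¹ *
              ‖∫ ξ in {ξ : E3 | (2 : ℝ) ^ (k - 2) ≤ ‖ξ‖ ∧ ‖ξ‖ ≤ (2 : ℝ) ^ (k + 2)},
                Complex.exp (Complex.I * ((⟪x + t • vhat v, ξ⟫ - t * μ * ‖ξ‖ : ℝ) : ℂ)) *
                  ((⟪cross3 (stdB j) v, ξ⟫ / ‖v‖ : ℝ) : ℂ) *
                  G ξ * ((χ (t * (‖ξ‖ - μ * ⟪vhat v, ξ⟫)) : ℝ) : ℂ)‖ ≤
              C * (t ^ 2)⁻¹ * (2 : ℝ) ^ (2 * k) * MG := by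
  refine ⟨2 ^ 40, by norm_num, ?_⟩
  intro μ hμ j k t ht x v hv G hGm MG hG χ hχm hχ1 hχ0
  set A : ℝ := 2 ^ (12 : ℕ) with hAdef
  have hA : (0:ℝ) < A := by positivity
  have hA' : A = 4096 := by norm_num [hAdef]
  set n := ‖v‖ with hndef
  have hn0 : 0 < n := norm_pos_iff.2 hv
  have h1n : (0:ℝ) < 1 + n := by linarith
  set X := (2:ℝ) ^ k with hXdef
  have hX0 : (0:ℝ) < X := by positivity
  set L := (2:ℝ) ^ (k + 2) with hLdef
  set r0 := (2:ℝ) ^ (k - 2) with hr0def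
  have hL4 : L = 4 * X := by
    rw [hLdef, hXdef, zpow_add₀ (two_ne_zero) k 2]
    norm_num; ring
  have hL0 : (0:ℝ) < L := by rw [hLdef]; positivity
  have hr0pos : (0:ℝ) < r0 := by rw [hr0def]; positivity
  have hr0L : r0 ≤ L := by
    rw [hr0def, hLdef]; exact zpow_le_zpow_right₀ one_le_two (by omega)
  -- MG is nonnegative
  have hstdn : ‖(r0 • stdB 0 : E3)‖ = r0 := by
    rw [norm_smul, stdB_norm, Real.norm_eq_abs, abs_of_pos hr0pos, mul_one]
  have hMG : 0 ≤ MG :=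
    le_trans (norm_nonneg _) (hG _ (le_of_eq hstdn.symm) (by rw [hstdn]; exact hr0L))
  -- the unit vector along v and friends
  set u : E3 := n⁻¹ • v with hudef
  have hu : ‖u‖ = 1 := by
    rw [hudef, norm_smul, Real.norm_eq_abs, abs_of_pos (inv_pos.2 hn0), ← hndef]
    field_simp
  obtain ⟨b, hb0⟩ := exists_onb u hu
  set w : E3 := cross3 (stdB j) v with hwdef
  have hwv : ⟪w, v⟫ = 0 := cross3_inner_right _ _
  have hwu : ⟪w, u⟫ = 0 := by rw [hudef, real_inner_smul_right, hwv, mul_zero]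
  have hwn : ‖w‖ ≤ n := by
    have h := cross3_norm_le (stdB j) v; rwa [stdB_norm, one_mul, ← hndef] at h
  have huu : ⟪u, u⟫ = 1 := by rw [real_inner_self_eq_norm_sq, hu]; norm_num
  have huinner : ∀ ξ : E3, ⟪u, ξ⟫ = n⁻¹ * ⟪v, ξ⟫ := fun ξ => by
    rw [hudef, real_inner_smul_left]
  have hperp : ∀ ξ : E3, ‖ξ - ⟪u, ξ⟫ • u‖ ^ 2 = ‖ξ‖ ^ 2 - ⟪u, ξ⟫ ^ 2 := by
    intro ξ
    rw [← real_inner_self_eq_norm_sq, ← real_inner_self_eq_norm_sq]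
    simp only [inner_sub_left, inner_sub_right, real_inner_smul_left, real_inner_smul_right, huu]
    rw [real_inner_comm ξ u]
    ring
  have hwinner : ∀ ξ : E3, ⟪w, ξ⟫ = ⟪w, ξ - ⟪u, ξ⟫ • u⟫ := by
    intro ξ
    rw [inner_sub_right, real_inner_smul_right, hwu, mul_zero, sub_zero]
  -- the cylinder box
  set ρ := Real.sqrt (4 * A * L / t) with hρdef
  have hρ0 : 0 ≤ ρ := Real.sqrt_nonneg _
  have hρ2 : ρ ^ 2 = 4 * A * L / t := Real.sq_sqrt (by positivity)
  set cc : Fin 3 → ℝ := fun i => if i = 0 then L else ρ with hccdef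
  set Box := {ξ : E3 | ∀ i, |⟪b i, ξ⟫| ≤ cc i} with hBoxdef
  have hBoxm : MeasurableSet Box := by
    have h : Box = ⋂ i, {ξ : E3 | |⟪b i, ξ⟫| ≤ cc i} := by
      ext ξ; simp [hBoxdef, Set.mem_iInter]
    rw [h]
    refine MeasurableSet.iInter fun i => ?_
    exact measurableSet_le ((continuous_const.inner continuous_id).abs).measurable
      measurable_const
  have hvol : volume Box = ENNReal.ofReal (2 * L) * ENNReal.ofReal (2 * ρ) *
      ENNReal.ofReal (2 * ρ) := by
    rw [hBoxdef, box_volume b cc]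
    simp [hccdef]
  have hfin : volume Box < ⊤ := by
    rw [hvol]
    exact ENNReal.mul_lt_top (ENNReal.mul_lt_top ENNReal.ofReal_lt_top ENNReal.ofReal_lt_top)
      ENNReal.ofReal_lt_top
  have hvolR : (volume Box).toReal = 8 * (L * ρ ^ 2) := by
    rw [hvol, ENNReal.toReal_mul, ENNReal.toReal_mul,
      ENNReal.toReal_ofReal (by positivity : (0:ℝ) ≤ 2 * L),
      ENNReal.toReal_ofReal (by positivity : (0:ℝ) ≤ 2 * ρ)]
    ring
  -- measurability of the annulus
  have hAnnm : MeasurableSet {ξ : E3 | r0 ≤ ‖ξ‖ ∧ ‖ξ‖ ≤ L} := by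
    have h : {ξ : E3 | r0 ≤ ‖ξ‖ ∧ ‖ξ‖ ≤ L} = {ξ : E3 | r0 ≤ ‖ξ‖} ∩ {ξ : E3 | ‖ξ‖ ≤ L} := rfl
    rw [h]
    exact (measurableSet_le measurable_const measurable_norm).inter
      (measurableSet_le measurable_norm measurable_const)
  -- facts on the support of the cutoff
  have hsupp : ∀ ξ : E3, ‖ξ‖ ≤ L → t * (‖ξ‖ - μ * ⟪vhat v, ξ⟫) < A →
      ξ ∈ Box ∧ ‖ξ - ⟪u, ξ⟫ • u‖ ≤ ρ ∧ ‖ξ - ⟪u, ξ⟫ • u‖ ≤ (1 + n) * (4 * A) / t := by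
    intro ξ hξL hξs
    have hgeo := geom hμ ht hv (by rw [← hAdef]; exact hξs)
    obtain ⟨G1, G2⟩ := hgeo
    rw [← hAdef] at G1 G2
    rw [← hndef] at G2
    set P := ‖ξ - ⟪u, ξ⟫ • u‖ with hPdef
    have hP0 : 0 ≤ P := norm_nonneg _
    have hP2 : P ^ 2 = ‖ξ‖ ^ 2 - (n⁻¹ * ⟪v, ξ⟫) ^ 2 := by
      rw [hPdef, hperp ξ, huinner ξ]
    have hG1 : t * P ^ 2 ≤ 4 * A * ‖ξ‖ := by rw [hP2]; exact G1
    have hPρ : P ≤ ρ := by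
      have h1 : P ^ 2 ≤ ρ ^ 2 := by
        rw [hρ2, le_div_iff₀ ht]
        calc P ^ 2 * t = t * P ^ 2 := by ring
          _ ≤ 4 * A * ‖ξ‖ := hG1
          _ ≤ 4 * A * L := mul_le_mul_of_nonneg_left hξL (by positivity)
      calc P = Real.sqrt (P ^ 2) := (Real.sqrt_sq hP0).symm
        _ ≤ Real.sqrt (ρ ^ 2) := Real.sqrt_le_sqrt h1
        _ = ρ := Real.sqrt_sq hρ0
    have hP4 : P ≤ (1 + n) * (4 * A) / t := by
      have e1 : t * (t * P ^ 2) ≤ t * (4 * A * ‖ξ‖) := mul_le_mul_of_nonneg_left hG1 ht.le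
      have e2 : (4 * A) * (t * ‖ξ‖) ≤ (4 * A) * (2 * (1 + n) ^ 2 * A) :=
        mul_le_mul_of_nonneg_left G2 (by positivity)
      have h2 : (P * t) ^ 2 ≤ ((1 + n) * (4 * A)) ^ 2 := by
        calc (P * t) ^ 2 = t * (t * P ^ 2) := by ring
          _ ≤ t * (4 * A * ‖ξ‖) := e1
          _ = 4 * A * (t * ‖ξ‖) := by ring
          _ ≤ 4 * A * (2 * (1 + n) ^ 2 * A) := e2
          _ = 8 * (A * (1 + n)) ^ 2 := by ring
          _ ≤ 16 * (A * (1 + n)) ^ 2 := by linarith [sq_nonneg (A * (1 + n))]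
          _ = ((1 + n) * (4 * A)) ^ 2 := by ring
      have h3 : P * t ≤ (1 + n) * (4 * A) := by
        have hPt : 0 ≤ P * t := mul_nonneg hP0 ht.le
        calc P * t = Real.sqrt ((P * t) ^ 2) := (Real.sqrt_sq hPt).symm
          _ ≤ Real.sqrt (((1 + n) * (4 * A)) ^ 2) := Real.sqrt_le_sqrt h2
          _ = (1 + n) * (4 * A) := Real.sqrt_sq (by positivity)
      rw [le_div_iff₀ ht]
      exact h3
    refine ⟨?_, hPρ, hP4⟩
    intro i
    by_cases hi : i = 0
    · subst hi
      have hcc : cc 0 = L := by simp [hccdef]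
      rw [hcc, hb0]
      calc |⟪u, ξ⟫| ≤ ‖u‖ * ‖ξ‖ := abs_real_inner_le_norm u ξ
        _ = ‖ξ‖ := by rw [hu, one_mul]
        _ ≤ L := hξL
    · have hcc : cc i = ρ := by simp [hccdef, hi]
      rw [hcc]
      have hbiu : ⟪b i, u⟫ = 0 := by
        rw [← hb0]
        exact b.orthonormal.2 hi
      have hsplit : ⟪b i, ξ⟫ = ⟪b i, ξ - ⟪u, ξ⟫ • u⟫ := by
        rw [inner_sub_right, real_inner_smul_right, hbiu, mul_zero, sub_zero]
      calc |⟪b i, ξ⟫| = |⟪b i, ξ - ⟪u, ξ⟫ • u⟫| := by rw [hsplit]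
        _ ≤ ‖b i‖ * ‖ξ - ⟪u, ξ⟫ • u‖ := abs_real_inner_le_norm _ _
        _ = ‖ξ - ⟪u, ξ⟫ • u‖ := by rw [b.orthonormal.1 i, one_mul]
        _ ≤ ρ := hPρ
  -- pointwise norm of the integrand
  have hnormf : ∀ ξ : E3,
      ‖Complex.exp (Complex.I * ((⟪x + t • vhat v, ξ⟫ - t * μ * ‖ξ‖ : ℝ) : ℂ)) *
          ((⟪w, ξ⟫ / n : ℝ) : ℂ) * G ξ * ((χ (t * (‖ξ‖ - μ * ⟪vhat v, ξ⟫)) : ℝ) : ℂ)‖ =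
        |⟪w, ξ⟫ / n| * ‖G ξ‖ * |χ (t * (‖ξ‖ - μ * ⟪vhat v, ξ⟫))| := by
    intro ξ
    rw [norm_mul, norm_mul, norm_mul]
    have hexp : ‖Complex.exp (Complex.I * ((⟪x + t • vhat v, ξ⟫ - t * μ * ‖ξ‖ : ℝ) : ℂ))‖ = 1 := by
      rw [Complex.norm_exp]
      simp [Complex.mul_re]
    rw [hexp, one_mul, Complex.norm_real, Complex.norm_real, Real.norm_eq_abs, Real.norm_eq_abs]
  -- symbol bounds
  have hsymP : ∀ ξ : E3, |⟪w, ξ⟫ / n| ≤ ‖ξ - ⟪u, ξ⟫ • u‖ := by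
    intro ξ
    rw [abs_div, abs_of_pos hn0, div_le_iff₀ hn0]
    calc |⟪w, ξ⟫| = |⟪w, ξ - ⟪u, ξ⟫ • u⟫| := by rw [← hwinner ξ]
      _ ≤ ‖w‖ * ‖ξ - ⟪u, ξ⟫ • u‖ := abs_real_inner_le_norm _ _
      _ ≤ n * ‖ξ - ⟪u, ξ⟫ • u‖ := mul_le_mul_of_nonneg_right hwn (norm_nonneg _)
      _ = ‖ξ - ⟪u, ξ⟫ • u‖ * n := mul_comm _ _
  have hsymL : ∀ ξ : E3, ‖ξ‖ ≤ L → |⟪w, ξ⟫ / n| ≤ L := by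
    intro ξ hξ
    rw [abs_div, abs_of_pos hn0, div_le_iff₀ hn0]
    calc |⟪w, ξ⟫| ≤ ‖w‖ * ‖ξ‖ := abs_real_inner_le_norm _ _
      _ ≤ n * L := mul_le_mul hwn hξ (norm_nonneg _) hn0.le
      _ = L * n := mul_comm _ _
  constructor
  · -- first estimate
    refine le_trans (intbound hAnnm hBoxm hfin (B := L * MG) (by positivity) ?_) ?_
    · intro ξ hξ
      obtain ⟨hξ1, hξ2⟩ := hξ
      by_cases hs : t * (‖ξ‖ - μ * ⟪vhat v, ξ⟫) < A
      · obtain ⟨hBox, -, -⟩ := hsupp ξ hξ2 hs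
        rw [Set.indicator_of_mem hBox, hnormf ξ]
        calc |⟪w, ξ⟫ / n| * ‖G ξ‖ * |χ (t * (‖ξ‖ - μ * ⟪vhat v, ξ⟫))| ≤
            L * MG * 1 := by
              refine mul_le_mul (mul_le_mul (hsymL ξ hξ2) (hG ξ hξ1 hξ2) (norm_nonneg _)
                hL0.le) (hχ1 _) (abs_nonneg _) (by positivity)
          _ = L * MG := mul_one _
      · have h0 : χ (t * (‖ξ‖ - μ * ⟪vhat v, ξ⟫)) = 0 :=
          hχ0 _ (le_trans (not_lt.1 hs) (le_abs_self _))
        rw [hnormf ξ, h0]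
        simp only [abs_zero, mul_zero]
        exact Set.indicator_nonneg (fun _ _ => by positivity) ξ
    · rw [hvolR]
      have h3k : (2:ℝ) ^ (3 * k) = X ^ 3 := by
        rw [hXdef, show (3:ℤ) * k = k + k + k by ring,
          zpow_add₀ (two_ne_zero : (2:ℝ) ≠ 0), zpow_add₀ (two_ne_zero : (2:ℝ) ≠ 0)]
        ring
      calc 8 * (L * ρ ^ 2) * (L * MG) = 2 ^ 23 * (t⁻¹ * (X ^ 3 * MG)) := by
            rw [hρ2, hA', hL4]; ring
        _ ≤ 2 ^ 40 * (t⁻¹ * (X ^ 3 * MG)) := by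
            refine mul_le_mul_of_nonneg_right (by norm_num) ?_
            exact mul_nonneg (inv_nonneg.2 ht.le) (mul_nonneg (by positivity) hMG)
        _ = 2 ^ 40 * t⁻¹ * (2:ℝ) ^ (3 * k) * MG := by rw [h3k]; ring
  · -- second estimate
    refine le_trans (mul_le_mul_of_nonneg_left
      (intbound hAnnm hBoxm hfin (B := (1 + n) * (4 * A) / t * MG) (by positivity) ?_)
      (inv_nonneg.2 h1n.le)) ?_
    case refine_2 =>
      calc (1 + n)⁻¹ * ((volume Box).toReal * ((1 + n) * (4 * A) / t * MG))
          = (volume Box).toReal * (4 * A / t * MG) := by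
            field_simp [h1n.ne']
        _ ≤ 2 ^ 40 * (t ^ 2)⁻¹ * (2:ℝ) ^ (2 * k) * MG := by
            rw [hvolR]
            have h2k : (2:ℝ) ^ (2 * k) = X ^ 2 := by
              rw [hXdef, show (2:ℤ) * k = k + k by ring,
                zpow_add₀ (two_ne_zero : (2:ℝ) ≠ 0)]
              ring
            calc 8 * (L * ρ ^ 2) * (4 * A / t * MG) = 2 ^ 35 * ((t ^ 2)⁻¹ * (X ^ 2 * MG)) := by
                  rw [hρ2, hA', hL4]; ring
              _ ≤ 2 ^ 40 * ((t ^ 2)⁻¹ * (X ^ 2 * MG)) := by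
                  refine mul_le_mul_of_nonneg_right (by norm_num) ?_
                  exact mul_nonneg (inv_nonneg.2 (by positivity)) (mul_nonneg (by positivity) hMG)
              _ = 2 ^ 40 * (t ^ 2)⁻¹ * (2:ℝ) ^ (2 * k) * MG := by rw [h2k]; ring
    · intro ξ hξ
      obtain ⟨hξ1, hξ2⟩ := hξ
      by_cases hs : t * (‖ξ‖ - μ * ⟪vhat v, ξ⟫) < A
      · obtain ⟨hBox, -, hP4⟩ := hsupp ξ hξ2 hs
        rw [Set.indicator_of_mem hBox, hnormf ξ]
        have hsy : |⟪w, ξ⟫ / n| ≤ (1 + n) * (4 * A) / t :=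
          le_trans (hsymP ξ) hP4
        calc |⟪w, ξ⟫ / n| * ‖G ξ‖ * |χ (t * (‖ξ‖ - μ * ⟪vhat v, ξ⟫))| ≤
            (1 + n) * (4 * A) / t * MG * 1 := by
              refine mul_le_mul (mul_le_mul hsy (hG ξ hξ1 hξ2) (norm_nonneg _)
                (by positivity)) (hχ1 _) (abs_nonneg _) (by positivity)
          _ = (1 + n) * (4 * A) / t * MG := mul_one _
      · have h0 : χ (t * (‖ξ‖ - μ * ⟪vhat v, ξ⟫)) = 0 :=
          hχ0 _ (le_trans (not_lt.1 hs) (le_abs_self _))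
        rw [hnormf ξ, h0]
        simp only [abs_zero, mul_zero]
        exact Set.indicator_nonneg (fun _ _ => by positivity) ξ
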